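/- Fix n ≥ 1 and a, b ∈ ℕ with a ≥ 1. The number of increasing prime u-parking functions, where u_i = a + b·i for 0 ≤ i ≤ n-1, equals ((a-b)/n)·C(a+(b+1)(n-1), n-1) + (b/n)·C((b+1)(n-1), n-1). -/

import Mathlib

/-- `#{j : a j < t}`. -/
def countLt {n : ℕ} (a : Fin n → ℕ) (t : ℕ) : ℕ :=
  (Finset.univ.filter fun j => a j < t).card

/-- `a` is a `u`-parking function: `#{j : a j < u i} ≥ i + 1` for all `i = 0, …, n-1`. -/
def IsUPF {n : ℕ} (u : Fin n → ℕ) (a : Fin n → ℕ) : Prop :=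
  ∀ i : Fin n, (i : ℕ) + 1 ≤ countLt a (u i)

/-- `a` is a prime `u`-parking function. -/
def IsPrimeUPF {n : ℕ} (u : Fin n → ℕ) (a : Fin n → ℕ) : Prop :=
  IsUPF u a ∧ ∀ i : Fin n, (i : ℕ) + 1 < n → (i : ℕ) + 1 < countLt a (u i)


/-! ### Auxiliary definitions -/

def seqs : List ℕ → ℕ → Finset (List ℕ)
  | [], _ => {[]}
  | c :: cs, lo => (Finset.Ico lo c).biUnion fun v => (seqs cs v).image (v :: ·)

def glist (b : ℕ) : ℕ → ℕ → List ℕ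
  | 0, _ => []
  | m+1, a => a :: glist b m (a + b)

def g (b m a : ℕ) : ℕ := (seqs (glist b m a) 0).card

noncomputable def Gf (b m a : ℕ) : ℚ :=
  (a : ℚ) / ((a : ℚ) + b * m) * ((a - 1 + (b+1) * m).choose m : ℕ)

noncomputable def Ff (b m a : ℕ) : ℚ :=
  ((a : ℚ) - b) / (m+1) * ((a + (b+1) * m).choose m : ℕ)
    + (b : ℚ) / (m+1) * (((b+1) * m).choose m : ℕ)

/-! ### Membership and cardinality of `seqs` -/

lemma mem_seqs : ∀ (C : List ℕ) (lo : ℕ) (l : List ℕ),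
    l ∈ seqs C lo ↔ List.Chain (· ≤ ·) lo l ∧ l.length = C.length ∧
      ∀ i < C.length, l.getD i 0 < C.getD i 0 := by
  intro C
  induction C with
  | nil =>
    intro lo l
    simp only [seqs, Finset.mem_singleton, List.length_nil]
    constructor
    · rintro rfl; simp [List.Chain]
    · rintro ⟨-, h, -⟩
      exact List.eq_nil_of_length_eq_zero h
  | cons c cs ih =>
    intro lo l
    simp only [seqs, Finset.mem_biUnion, Finset.mem_image, Finset.mem_Ico]
    constructor
    · rintro ⟨v, ⟨hlo, hvc⟩, t, ht, rfl⟩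
      obtain ⟨hch, hlen, hidx⟩ := (ih v t).mp ht
      refine ⟨List.Chain.cons hlo hch, by simp [hlen], ?_⟩
      intro i hi
      cases i with
      | zero => simpa using hvc
      | succ j =>
        simp only [List.getD_cons_succ]
        exact hidx j (by simpa using hi)
    · rintro ⟨hch, hlen, hidx⟩
      cases l with
      | nil => simp at hlen
      | cons v t =>
        cases hch with
        | cons_cons hlo hch =>
          refine ⟨v, ⟨hlo, by simpa using hidx 0 (by simp)⟩, t, ?_, rfl⟩
          refine (ih v t).mpr ⟨hch, by simpa using hlen, ?_⟩
          intro i hi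
          have := hidx (i+1) (by simpa using hi)
          simpa using this

lemma card_seqs_cons (c : ℕ) (cs : List ℕ) (lo : ℕ) :
    (seqs (c :: cs) lo).card = ∑ v ∈ Finset.Ico lo c, (seqs cs v).card := by
  rw [show seqs (c :: cs) lo = (Finset.Ico lo c).biUnion
      (fun v => (seqs cs v).image (v :: ·)) from rfl]
  rw [Finset.card_biUnion]
  · refine Finset.sum_congr rfl fun v _ => ?_
    exact Finset.card_image_of_injective _ (fun x y h => by simpa using h)
  · intro x hx y hy hxy
    simp only [Finset.disjoint_left, Finset.mem_image]
    rintro l ⟨t, ht, rfl⟩ ⟨t', ht', h⟩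
    exact hxy (by simpa using (List.cons_eq_cons.mp h).1.symm)

lemma card_seqs_shift : ∀ (cs : List ℕ) (t lo : ℕ),
    (seqs (cs.map (· + t)) (lo + t)).card = (seqs cs lo).card := by
  intro cs
  induction cs with
  | nil => intro t lo; simp [seqs]
  | cons c cs ih =>
    intro t lo
    rw [List.map_cons, card_seqs_cons, card_seqs_cons]
    rw [show Finset.Ico (lo + t) (c + t) = Finset.image (· + t) (Finset.Ico lo c) by
      simp [Finset.image_add_right_Ico]]
    rw [Finset.sum_image (by intro x _ y _ h; simp only at h; omega)]
    exact Finset.sum_congr rfl fun v _ => ih t v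

/-! ### `glist` lemmas -/

lemma glist_length (b m a : ℕ) : (glist b m a).length = m := by
  induction m generalizing a with
  | zero => rfl
  | succ m ih => simp [glist, ih]

lemma glist_getD (b : ℕ) : ∀ (m a i : ℕ), i < m → (glist b m a).getD i 0 = a + b * i := by
  intro m
  induction m with
  | zero => omega
  | succ m ih =>
    intro a i hi
    cases i with
    | zero => simp [glist]
    | succ j =>
      simp only [glist, List.getD_cons_succ]
      rw [ih (a+b) j (by omega)]
      ring

lemma glist_map (b : ℕ) : ∀ (m a t : ℕ), (glist b m a).map (· + t) = glist b m (a + t) := by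
  intro m
  induction m with
  | zero => intro a t; rfl
  | succ m ih =>
    intro a t
    simp only [glist, List.map_cons, ih]
    rw [show a + b + t = a + t + b by ring]

/-! ### Recurrences for `g` -/

lemma g_zero (b a : ℕ) : g b 0 a = 1 := by simp [g, glist, seqs]

lemma grec (b m a : ℕ) : g b (m+1) a = ∑ v ∈ Finset.range a, g b m (a + b - v) := by
  rw [g, glist, card_seqs_cons]
  rw [show Finset.Ico 0 a = Finset.range a by rw [Nat.Ico_zero_eq_range]]
  refine Finset.sum_congr rfl fun v hv => ?_
  have hv' : v < a := Finset.mem_range.mp hv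
  have h := card_seqs_shift (glist b m (a+b-v)) v 0
  rw [glist_map] at h
  rw [show a + b - v + v = a + b by omega, Nat.zero_add] at h
  rw [g, ← h]

lemma g_zero_right (b m : ℕ) : g b (m+1) 0 = 0 := by simp [grec]

lemma gstep (b m a : ℕ) : g b (m+1) (a+1) = g b (m+1) a + g b m (a+1+b) := by
  rw [grec, Finset.sum_range_succ', grec]
  have : ∀ v, a + 1 + b - (v + 1) = a + b - v := fun v => by omega
  simp only [this, Nat.sub_zero]

/-! ### The rational identities -/

lemma Gf_zero_left (b m : ℕ) : Gf b m 0 = 0 := by simp [Gf]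

lemma key (b m a : ℕ) : Gf b (m+1) (a+1) = Gf b (m+1) a + Gf b m (a+1+b) := by
  cases a with
  | zero =>
    rw [Gf_zero_left, zero_add]
    unfold Gf
    set N := b + (b+1)*m with hN
    have h : (N+1) * N.choose m = (N+1).choose (m+1) * (m+1) := Nat.add_one_mul_choose_eq N m
    have hQ : (N+1).choose (m+1) = (b+1) * N.choose m := by
      have h2 : (N+1) * N.choose m = ((b+1) * N.choose m) * (m+1) := by
        rw [show N + 1 = (b+1)*(m+1) by rw [hN]; ring]; ring
      have := h2.symm.trans h
      exact (Nat.eq_of_mul_eq_mul_right (Nat.succ_pos m) this).symm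
    have e1 : 1 - 1 + (b+1)*(m+1) = N + 1 := by rw [hN]; simp; ring
    have e2 : 1 + b - 1 + (b+1)*m = N := by rw [hN]; omega
    rw [e1, e2, hQ]
    have d1 : ((1:ℚ) + b * (m+1)) ≠ 0 := by positivity
    have d2 : ((1:ℚ) + b + b * m) ≠ 0 := by positivity
    push_cast
    field_simp
    ring
  | succ a =>
    unfold Gf
    have e1 : a + 1 + 1 - 1 + (b+1)*(m+1) = (a + (b+1)*(m+1)) + 1 := by
      have : a + 1 + 1 - 1 = a + 1 := by omega
      rw [this]; ring
    have e2 : a + 1 - 1 + (b+1)*(m+1) = a + (b+1)*(m+1) := by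
      have : a + 1 - 1 = a := by omega
      rw [this]
    have e3 : a + 1 + 1 + b - 1 + (b+1)*m = a + (b+1)*(m+1) := by
      have : a + 1 + 1 + b - 1 = a + 1 + b := by omega
      rw [this]; ring
    rw [e1, e2, e3]
    set y := a + (b+1)*(m+1) with hy
    have hym : y - m = a + 1 + b*(m+1) := by
      have : y = a + 1 + b*(m+1) + m := by rw [hy]; ring
      rw [this, Nat.add_sub_cancel]
    have hq : (y.choose (m+1) : ℚ) * (m+1) = (y.choose m : ℕ) * ((a:ℚ) + 1 + b*(m+1)) := by
      have h := Nat.choose_succ_right_eq y m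
      rw [hym] at h
      exact_mod_cast congrArg (Nat.cast (R := ℚ)) h
    have hp : ((y+1).choose (m+1) : ℚ) = (y.choose m : ℕ) + (y.choose (m+1) : ℕ) := by
      push_cast [Nat.choose_succ_succ']
      ring
    rw [hp]
    have d1 : ((a:ℚ) + 1 + 1 + b * (m+1)) ≠ 0 := by positivity
    have d2 : ((a:ℚ) + 1 + b * (m+1)) ≠ 0 := by positivity
    have d3 : ((a:ℚ) + 1 + 1 + b + b * m) ≠ 0 := by positivity
    push_cast
    field_simp
    linear_combination ((b:ℚ)*(m+1)) * hq + ((b:ℚ)*((a:ℚ)+1-m+b*(m+1))) * hq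

lemma gval (b : ℕ) : ∀ m a, (g b m (a+1) : ℚ) = Gf b m (a+1) := by
  intro m
  induction m with
  | zero =>
    intro a
    rw [g_zero, Gf]
    have : ((a:ℚ)+1) ≠ 0 := by positivity
    simp [this]
  | succ m ih =>
    intro a
    induction a with
    | zero =>
      rw [gstep, g_zero_right, key, Gf_zero_left]
      push_cast
      rw [show 0 + 1 + b = b + 1 by ring, ih b]
    | succ a iha =>
      rw [gstep, key, ← iha]
      push_cast
      rw [show a + 1 + 1 + b = (a + 1 + b) + 1 by ring, ih (a+1+b)]

lemma Ff_zero (b m : ℕ) : Ff b m 0 = 0 := by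
  simp only [Ff]
  push_cast
  ring

lemma fstep (b m a : ℕ) : Ff b m (a+1) = Ff b m a + Gf b m (a+1) := by
  unfold Ff Gf
  have e2 : a + 1 - 1 + (b+1)*m = a + (b+1)*m := by omega
  have e1 : a + 1 + (b+1)*m = (a + (b+1)*m) + 1 := by omega
  rw [e1, e2]
  set y := a + (b+1)*m with hy
  have hym : y + 1 - m = a + 1 + b*m := by
    have : y + 1 = a + 1 + b*m + m := by rw [hy]; ring
    rw [this, Nat.add_sub_cancel]
  have hq : (y.choose m : ℚ) * ((y:ℚ)+1) = ((y+1).choose m : ℕ) * ((a:ℚ) + 1 + b*m) := by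
    have h := Nat.choose_mul_succ_eq y m
    rw [hym] at h
    exact_mod_cast congrArg (Nat.cast (R := ℚ)) h
  have hy' : (y:ℚ) = (a:ℚ) + (b+1)*m := by rw [hy]; push_cast; ring
  rw [hy'] at hq
  have d1 : ((m:ℚ)+1) ≠ 0 := by positivity
  have d2 : ((a:ℚ) + 1 + b*m) ≠ 0 := by positivity
  push_cast
  field_simp
  linear_combination (-((a:ℚ) + 1 - b)) * hq

lemma fsum (b m : ℕ) : ∀ a, (∑ w ∈ Finset.range a, Gf b m (w+1)) = Ff b m a := by
  intro a
  induction a with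
  | zero => simp [Ff_zero]
  | succ a ih => rw [Finset.sum_range_succ, ih, ← fstep]

lemma countLt_mono_iff {n : ℕ} (f : Fin n → ℕ) (hf : Monotone f) (k : Fin n) (t : ℕ) :
    (k : ℕ) + 1 ≤ countLt f t ↔ f k < t := by
  constructor
  · intro h
    by_contra hc
    push_neg at hc
    have hsub : (Finset.univ.filter fun j => f j < t) ⊆ Finset.Iio k := by
      intro j hj
      simp only [Finset.mem_filter] at hj
      rw [Finset.mem_Iio]
      by_contra hjk
      push_neg at hjk
      exact absurd (lt_of_lt_of_le hj.2 (le_trans hc (hf hjk))) (lt_irrefl _)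
    have := Finset.card_le_card hsub
    rw [Fin.card_Iio] at this
    unfold countLt at h
    omega
  · intro h
    have hsub : Finset.Iic k ⊆ (Finset.univ.filter fun j => f j < t) := by
      intro j hj
      rw [Finset.mem_Iic] at hj
      simp only [Finset.mem_filter, Finset.mem_univ, true_and]
      exact lt_of_le_of_lt (hf hj) h
    have := Finset.card_le_card hsub
    rwa [Fin.card_Iic] at this

theorem chain_iff_get' {R : ℕ → ℕ → Prop} {a : ℕ} {l : List ℕ} : List.Chain R a l ↔
    (∀ h : 0 < l.length, R a (l.get ⟨0, h⟩)) ∧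
      ∀ (i : ℕ) (h : i < l.length - 1), R (l.get ⟨i, by omega⟩) (l.get ⟨i+1, by omega⟩) := by
  rw [List.Chain, List.isChain_iff_getElem]
  constructor
  · intro h
    refine ⟨fun h0 => ?_, fun i hi => ?_⟩
    · have := h 0 (by simp; omega); simpa using this
    · have := h (i+1) (by simp; omega); simpa using this
  · rintro ⟨h1, h2⟩ i hi
    cases i with
    | zero => simpa using h1 (by simp at hi; omega)
    | succ i => simpa using h2 i (by simp at hi; omega)

lemma set_eq (a b m : ℕ) :
    {f : Fin (m+1) → ℕ | Monotone f ∧ IsPrimeUPF (fun i : Fin (m+1) => a + b * (i:ℕ)) f}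
      = ↑((seqs (a :: glist b m a) 0).image (fun l => fun i : Fin (m+1) => l.getD i 0)) := by
  have hCl : (a :: glist b m a).length = m + 1 := by simp [glist_length]
  have hCd : ∀ i < m + 1, (a :: glist b m a).getD i 0 =
      if i = 0 then a else a + b * (i - 1) := by
    intro i hi
    cases i with
    | zero => simp
    | succ j =>
      simp only [List.getD_cons_succ]
      rw [glist_getD b m a j (by omega)]
      simp
  ext f
  simp only [Set.mem_setOf_eq, Finset.coe_image, Set.mem_image, Finset.mem_coe]
  constructor
  · rintro ⟨hmono, hupf, hprime⟩
    refine ⟨List.ofFn f, ?_, ?_⟩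
    · rw [mem_seqs]
      refine ⟨?_, by simp [hCl], ?_⟩
      · rw [chain_iff_get']
        refine ⟨fun h => Nat.zero_le _, fun i hi => ?_⟩
        rw [List.get_ofFn, List.get_ofFn]
        exact hmono (by simp [Fin.le_def])
      · intro i hi
        rw [hCl] at hi
        have hlen : i < (List.ofFn f).length := by simpa using hi
        rw [List.getD_eq_getElem _ _ hlen, List.getElem_ofFn, hCd i hi]
        cases i with
        | zero =>
          have := (countLt_mono_iff f hmono ⟨0, hi⟩ _).mp (hupf ⟨0, hi⟩)
          simpa using this
        | succ j =>
          have hj : (j : ℕ) + 1 < m + 1 := hi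
          have hp := hprime ⟨j, by omega⟩ (by simpa using hj)
          have := (countLt_mono_iff f hmono ⟨j+1, hi⟩ _).mp (by simpa using hp)
          simpa using this
    · funext i
      have hlen : (i : ℕ) < (List.ofFn f).length := by simp; omega
      rw [List.getD_eq_getElem _ _ hlen, List.getElem_ofFn]
  · rintro ⟨l, hl, rfl⟩
    rw [mem_seqs] at hl
    obtain ⟨hch, hlen, hidx⟩ := hl
    rw [hCl] at hlen
    rw [chain_iff_get'] at hch
    obtain ⟨-, hadj⟩ := hch
    have hmono : Monotone (fun i : Fin (m+1) => l.getD (i : ℕ) 0) := by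
      rw [Fin.monotone_iff_le_succ]
      intro i
      have h1 : ((i.castSucc : Fin (m+1)) : ℕ) < l.length := by
        rw [hlen]; exact i.castSucc.isLt
      have h2 : ((i.succ : Fin (m+1)) : ℕ) < l.length := by
        rw [hlen]; exact i.succ.isLt
      rw [List.getD_eq_getElem _ _ h1, List.getD_eq_getElem _ _ h2]
      have := hadj (i : ℕ) (by rw [hlen]; simpa using i.isLt)
      simpa [List.get_eq_getElem] using this
    have hbd : ∀ i : ℕ, (hi : i < m + 1) →
        l.getD i 0 < if i = 0 then a else a + b * (i - 1) := by
      intro i hi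
      rw [← hCd i hi]
      exact hidx i (by rw [hCl]; exact hi)
    refine ⟨hmono, ?_, ?_⟩
    · intro i
      rw [countLt_mono_iff _ hmono]
      have := hbd (i : ℕ) i.isLt
      rcases Nat.eq_zero_or_pos (i : ℕ) with h0 | h0
      · have h' : l.getD (i:ℕ) 0 < a := by rw [h0]; rw [h0] at this; simpa using this
        exact lt_of_lt_of_le h' (Nat.le_add_right _ _)
      · rw [if_neg (by omega)] at this
        calc l.getD (i:ℕ) 0 < a + b * ((i:ℕ) - 1) := this
          _ ≤ a + b * (i : ℕ) := by
            have : (i:ℕ) - 1 ≤ (i:ℕ) := by omega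
            exact Nat.add_le_add_left (Nat.mul_le_mul_left b this) a
    · intro i hi
      have hk : (i : ℕ) + 1 < m + 1 := hi
      have := (countLt_mono_iff _ hmono ⟨(i:ℕ)+1, hk⟩ (a + b * (i:ℕ))).mpr ?_
      · simpa using this
      · have := hbd ((i:ℕ)+1) hk
        rw [if_neg (by omega)] at this
        simpa using this

lemma count_main (a b m : ℕ) :
    (((seqs (a :: glist b m a) 0).card : ℚ)) = Ff b m a := by
  rw [card_seqs_cons]
  have h1 : ∀ v ∈ Finset.Ico 0 a, (seqs (glist b m a) v).card = g b m (a - v) := by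
    intro v hv
    have hv' : v < a := (Finset.mem_Ico.mp hv).2
    have h := card_seqs_shift (glist b m (a-v)) v 0
    rw [glist_map, show a - v + v = a by omega, Nat.zero_add] at h
    rw [g, ← h]
  rw [Finset.sum_congr rfl h1, Nat.Ico_zero_eq_range]
  have h2 : ∑ v ∈ Finset.range a, g b m (a - v) = ∑ w ∈ Finset.range a, g b m (w+1) := by
    rw [← Finset.sum_range_reflect (fun w => g b m (w+1)) a]
    exact Finset.sum_congr rfl fun v hv => by
      have : v < a := Finset.mem_range.mp hv
      congr 1
      omega
  rw [h2, ← fsum b m a]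
  push_cast
  exact Finset.sum_congr rfl fun w _ => gval b m w

/-- The number of increasing prime `u`-parking functions with `u i = a + b * i` is
`((a-b)/n) C(a+(b+1)(n-1), n-1) + (b/n) C((b+1)(n-1), n-1)`. -/
theorem stmt3 (n a b : ℕ) (hn : 1 ≤ n) (ha : 1 ≤ a) :
    (({f : Fin n → ℕ | Monotone f ∧
        IsPrimeUPF (fun i : Fin n => a + b * (i : ℕ)) f}.ncard : ℚ))
      = ((a : ℚ) - b) / n * ((a + (b + 1) * (n - 1)).choose (n - 1))
        + (b : ℚ) / n * (((b + 1) * (n - 1)).choose (n - 1)) := by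
  obtain ⟨m, rfl⟩ : ∃ m, n = m + 1 := ⟨n - 1, by omega⟩
  rw [set_eq a b m, Set.ncard_coe_finset]
  have hinj : Set.InjOn (fun l : List ℕ => fun i : Fin (m+1) => l.getD (i:ℕ) 0)
      ↑(seqs (a :: glist b m a) 0) := by
    intro l1 h1 l2 h2 heq
    rw [Finset.mem_coe, mem_seqs] at h1 h2
    have hlen : l1.length = l2.length := by rw [h1.2.1, h2.2.1]
    refine List.ext_getElem hlen ?_
    intro i hi1 hi2
    have hi : i < m + 1 := by
      rw [h1.2.1] at hi1
      simpa [glist_length] using hi1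
    have := congrFun heq ⟨i, hi⟩
    simpa only [List.getD_eq_getElem _ _ hi1, List.getD_eq_getElem _ _ hi2] using this
  rw [Finset.card_image_of_injOn hinj, count_main a b m]
  simp only [Nat.add_sub_cancel, Ff]
  push_cast
  ring
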